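/- Let K be a field, L a Lie algebra over K, and H a nilpotent abelian Lie subalgebra of L. Let M be a Lie module over L. Assume: (i) M is the sum of its generalized weight spaces for H, i.e. the subspaces M^χ = {v ∈ M : for every h ∈ H there is n ≥ 1 with (h·(−) − χ(h))^n v = 0}, over all functions χ : H → K, together span M; (ii) L is spanned as a K-vector space by elements x for which there exists a function α : H → K with ⁅h, x⁆ = α(h)·x for all h ∈ H. Then for every h ∈ H there exists a K-linear endomorphism N_h of M such that N_h(v) = h·v − χ(h)·v for every χ and every v ∈ M^χ, and N_h is L-equivariant: N_h(x·v) = x·N_h(v) for all x ∈ L and v ∈ M (here x·v denotes the Lie module action ⁅x, v⁆). -/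

import Mathlib

/-- The generalized weight space of a Lie module `M` for a Lie subalgebra `H` of `L`
and a function `χ : H → K`: the set of `v ∈ M` such that for every `h ∈ H` some power
of the operator `(h • ·) - χ h` annihilates `v`. -/
def genWeightVectors (K : Type*) {L : Type*} (M : Type*) [Field K] [LieRing L]
    [LieAlgebra K L] [AddCommGroup M] [Module K M] [LieRingModule L M] [LieModule K L M]
    (H : LieSubalgebra K L) (χ : H → K) : Set M :=
  {v : M | ∀ h : H, ∃ n : ℕ, 1 ≤ n ∧
    ((LieModule.toEnd K L M (h : L) - χ h • (1 : Module.End K M)) ^ n) v = 0}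

/-- Let `K` be a field, `L` a Lie algebra over `K`, `H` a nilpotent abelian
Lie subalgebra of `L`, and `M` a Lie module over `L`.  Assume (i) `M` is spanned by its
generalized weight spaces for `H`, and (ii) `L` is spanned by elements `x` admitting a
function `α : H → K` with `⁅h, x⁆ = α h • x` for all `h ∈ H`.  Then for every `h ∈ H`
there is a `K`-linear endomorphism `N` of `M` with `N v = h • v - χ h • v` for every `χ`
and every `v` in the generalized weight space `M^χ`, and `N` is `L`-equivariant. -/
theorem stmt3 {K L M : Type*} [Field K] [LieRing L] [LieAlgebra K L]
    [AddCommGroup M] [Module K M] [LieRingModule L M] [LieModule K L M]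
    (H : LieSubalgebra K L) (habelian : IsLieAbelian H) (hnilp : LieRing.IsNilpotent H)
    (hweight : Submodule.span K (⋃ χ : H → K, genWeightVectors K M H χ) = ⊤)
    (hroot : Submodule.span K
      {x : L | ∃ α : H → K, ∀ h : H, ⁅(h : L), x⁆ = α h • x} = ⊤) :
    ∀ h : H, ∃ N : M →ₗ[K] M,
      (∀ (χ : H → K), ∀ v ∈ genWeightVectors K M H χ, N v = ⁅(h : L), v⁆ - χ h • v) ∧
      (∀ (x : L) (v : M), N ⁅x, v⁆ = ⁅x, N v⁆) := by
  classical
  letI : LieRing.IsNilpotent H := hnilp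
  intro h
  -- identify `genWeightVectors` with Mathlib's `genWeightSpace` for the `H`-action
  have hWV : ∀ χ : H → K, genWeightVectors K M H χ =
      (LieModule.genWeightSpace M χ : LieSubmodule K H M) := by
    intro χ
    ext v
    rw [SetLike.mem_coe, LieModule.mem_genWeightSpace]
    constructor
    · intro hv x
      obtain ⟨n, -, hn⟩ := hv x
      exact ⟨n, by rw [show LieModule.toEnd K H M x = LieModule.toEnd K L M (x : L) from LinearMap.ext fun m => rfl]; exact hn⟩
    · intro hv x
      obtain ⟨n, hn⟩ := hv x
      refine ⟨n + 1, Nat.le_add_left 1 n, ?_⟩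
      have : ((LieModule.toEnd K H M x - χ x • (1 : Module.End K M)) ^ (n + 1)) v = 0 := by
        rw [pow_succ']
        simp [hn]
      rwa [show LieModule.toEnd K H M x = LieModule.toEnd K L M (x : L) from LinearMap.ext fun m => rfl] at this
  set A : (H → K) → Submodule K M :=
    fun χ => (LieModule.genWeightSpace M χ : LieSubmodule K H M) with hA
  have hsup : ⨆ χ, A χ = ⊤ := by
    rw [← top_le_iff, ← hweight, Submodule.span_le]
    rintro v hv
    simp only [Set.mem_iUnion] at hv
    obtain ⟨χ, hχ⟩ := hv
    rw [hWV χ] at hχ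
    exact (le_iSup A χ : A χ ≤ _) hχ
  have hind : iSupIndep A := by
    rw [hA]
    have := LieModule.iSupIndep_genWeightSpace K H M
    rwa [← LieSubmodule.iSupIndep_toSubmodule] at this
  have hInternal : DirectSum.IsInternal A :=
    DirectSum.isInternal_submodule_of_iSupIndep_of_iSup_eq_top hind hsup
  let e : (DirectSum (H → K) fun χ => A χ) ≃ₗ[K] M :=
    LinearEquiv.ofBijective (DirectSum.coeLinearMap A) hInternal
  let f : ∀ χ : H → K, A χ →ₗ[K] M := fun χ =>
    (LieModule.toEnd K L M (h : L) - χ h • (1 : Module.End K M)) ∘ₗ (A χ).subtype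
  let N : M →ₗ[K] M := (DirectSum.toModule K (H → K) M f) ∘ₗ (e.symm : M ≃ₗ[K] DirectSum (H → K) fun χ => A χ).toLinearMap
  have key : ∀ (χ : H → K) (v : M) (hv : v ∈ A χ),
      N v = ⁅(h : L), v⁆ - χ h • v := by
    intro χ v hv
    have he : e.symm v = DirectSum.lof K (H → K) (fun χ => A χ) χ ⟨v, hv⟩ := by
      apply e.injective
      rw [e.apply_symm_apply]
      show v = DirectSum.coeLinearMap A _
      rw [DirectSum.lof_eq_of, DirectSum.coeLinearMap_of]
    show DirectSum.toModule K (H → K) M f (e.symm v) = _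
    rw [he, DirectSum.toModule_lof]
    simp [f, LieModule.toEnd_apply_apply]
  refine ⟨N, ?_, ?_⟩
  · intro χ v hv
    rw [hWV χ] at hv
    exact key χ v hv
  · -- equivariance
    have main : ∀ x ∈ {x : L | ∃ α : H → K, ∀ h : H, ⁅(h : L), x⁆ = α h • x},
        ∀ v : M, N ⁅x, v⁆ = ⁅x, N v⁆ := by
      rintro x ⟨α, hα⟩ v
      have hx : x ∈ LieAlgebra.rootSpace H α := by
        rw [LieModule.mem_genWeightSpace]
        intro y
        refine ⟨1, ?_⟩
        simp [LieModule.toEnd_apply_apply, LieSubalgebra.coe_bracket_of_module, hα y]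
      -- prove it for v in each weight space, then span
      have hv : v ∈ (⊤ : Submodule K M) := trivial
      rw [← hweight] at hv
      induction hv using Submodule.span_induction with
      | mem v hv =>
        simp only [Set.mem_iUnion] at hv
        obtain ⟨χ, hχ⟩ := hv
        have hvχ : v ∈ A χ := by rw [hA]; rw [hWV χ] at hχ; exact hχ
        have hxv : ⁅x, v⁆ ∈ A (α + χ) := by
          have := LieAlgebra.mapsTo_toEnd_genWeightSpace_add_of_mem_rootSpace K L H M α χ hx hvχ
          rw [hA]; exact this
        rw [key (α + χ) _ hxv, key χ v hvχ]
        have leib : ⁅(h : L), ⁅x, v⁆⁆ = ⁅⁅(h : L), x⁆, v⁆ + ⁅x, ⁅(h : L), v⁆⁆ :=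
          leibniz_lie _ _ _
        rw [leib, hα h]
        simp only [Pi.add_apply, lie_sub, lie_smul, smul_lie]
        module
      | zero => simp
      | add u w _ _ hu hw => simp only [lie_add, map_add, hu, hw]
      | smul c u _ hu => simp only [lie_smul, map_smul, hu]
    intro x v
    have hx : x ∈ (⊤ : Submodule K L) := trivial
    rw [← hroot] at hx
    induction hx using Submodule.span_induction with
    | mem x hx => exact main x hx v
    | zero => simp
    | add u w _ _ hu hw => simp only [add_lie, map_add, hu, hw]
    | smul c u _ hu => simp only [smul_lie, map_smul, hu]
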